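/- Let G(p) be a framework on n nodes in general position in ℝ^r with r ≤ n−2, admitting a positive semidefinite stress matrix S of rank n−r−1. Then the vectors p^i − p^j for (i,j) ∈ E(G) do not lie on a quadratic at infinity; i.e., there is no nonzero symmetric r×r matrix Φ with (p^i − p^j)ᵀΦ(p^i − p^j) = 0 for all edges (i,j). -/

import Mathlib

open Matrix

/-- The (r+1)×n matrix whose j-th column is (p^j, 1). -/
def calA {n r : ℕ} (p : Fin n → Fin r → ℝ) : Matrix (Fin (r + 1)) (Fin n) ℝ :=
  fun i j => if h : (i : ℕ) < r then p j ⟨i, h⟩ else 1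

/-- No subset of the points of cardinality r+1 is affinely dependent. -/
def InGeneralPosition {n r : ℕ} (p : Fin n → Fin r → ℝ) : Prop :=
  ∀ s : Finset (Fin n), s.card = r + 1 →
    AffineIndependent ℝ (fun i : {x // x ∈ s} => p i)

/-- `S` is a stress matrix of the framework `G(p)`. -/
def IsStressMatrix {n r : ℕ} (G : SimpleGraph (Fin n)) (p : Fin n → Fin r → ℝ)
    (S : Matrix (Fin n) (Fin n) ℝ) : Prop :=
  S.IsSymm ∧ (∀ i j, i ≠ j → ¬ G.Adj i j → S i j = 0) ∧ calA p * S = 0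



lemma qcol_li {n r : ℕ} (p : Fin n → Fin r → ℝ) (hgen : InGeneralPosition p)
    (s : Finset (Fin n)) (hs : s.card = r + 1) :
    LinearIndependent ℝ (fun i : {x // x ∈ s} => (fun a => calA p a i.1)) := by
  rw [Fintype.linearIndependent_iff]
  intro g hg
  have hlast : ∑ i : {x // x ∈ s}, g i = 0 := by
    have h := congrFun hg ⟨r, Nat.lt_succ_self r⟩
    simpa [calA, Finset.sum_apply] using h
  have hp : ∑ i : {x // x ∈ s}, g i • p i.1 = 0 := by
    funext a
    have h := congrFun hg ⟨a.1, Nat.lt_succ_of_lt a.2⟩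
    simpa [calA, a.2, Finset.sum_apply, Fin.eta] using h
  intro i
  exact affineIndependent_iff.mp (hgen s hs) Finset.univ g hlast hp i (Finset.mem_univ i)

lemma qcol_span {n r : ℕ} (p : Fin n → Fin r → ℝ) (hgen : InGeneralPosition p)
    (s : Finset (Fin n)) (hs : s.card = r + 1) :
    Submodule.span ℝ (Set.range (fun i : {x // x ∈ s} => (fun a => calA p a i.1))) = ⊤ := by
  have hne : Nonempty {x // x ∈ s} :=
    (Finset.card_pos.mp (by omega)).to_subtype
  exact (qcol_li p hgen s hs).span_eq_top_of_card_eq_finrank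
    (by rw [Fintype.card_coe, hs, Module.finrank_pi, Fintype.card_fin])

lemma ortho_zero {n r : ℕ} (p : Fin n → Fin r → ℝ) (hgen : InGeneralPosition p)
    (s : Finset (Fin n)) (hs : s.card = r + 1) (w : Fin (r + 1) → ℝ)
    (hw : ∀ i ∈ s, (fun a => calA p a i) ⬝ᵥ w = 0) : w = 0 := by
  have hall : ∀ x : Fin (r + 1) → ℝ, x ⬝ᵥ w = 0 := by
    intro x
    have hx : x ∈ Submodule.span ℝ
        (Set.range (fun i : {x // x ∈ s} => (fun a => calA p a i.1))) := by
      rw [qcol_span p hgen s hs]; trivial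
    induction hx using Submodule.span_induction with
    | mem z hz => obtain ⟨i, rfl⟩ := hz; exact hw i.1 i.2
    | zero => simp
    | add x y _ _ hx hy => simp [add_dotProduct, hx, hy]
    | smul c x _ hx => simp [smul_dotProduct, hx]
  funext a
  simpa [single_dotProduct] using hall (Pi.single a 1)
lemma null_space_rep {n r : ℕ} (hn : r + 2 ≤ n) (p : Fin n → Fin r → ℝ)
    (hgen : InGeneralPosition p) (S : Matrix (Fin n) (Fin n) ℝ)
    (hSsym : S.IsSymm) (hAS : calA p * S = 0) (hrank : S.rank = n - r - 1)
    (v : Fin n → ℝ) (hv : S.mulVec v = 0) :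
    ∃ w : Fin (r + 1) → ℝ, (calA p)ᵀ.mulVec w = v := by
  set A := calA p with hA
  have hSA : S * Aᵀ = 0 := by
    have h1 : (A * S)ᵀ = 0 := by rw [hAS]; simp
    rwa [transpose_mul, hSsym.eq] at h1
  have hle : LinearMap.range ((Aᵀ).mulVecLin) ≤ LinearMap.ker (S.mulVecLin) := by
    rintro x ⟨w, rfl⟩
    simp only [LinearMap.mem_ker, mulVecLin_apply, mulVec_mulVec, hSA, zero_mulVec]
  -- rank of A
  obtain ⟨s, -, hs⟩ := Finset.exists_subset_card_eq
    (show r + 1 ≤ (Finset.univ : Finset (Fin n)).card by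
      rw [Finset.card_univ, Fintype.card_fin]; omega)
  have hranktop : LinearMap.range (A.mulVecLin) = ⊤ := by
    rw [range_mulVecLin, eq_top_iff, ← qcol_span p hgen s hs]
    apply Submodule.span_le.mpr
    rintro _ ⟨i, rfl⟩
    exact Submodule.subset_span ⟨i.1, rfl⟩
  have hrankA : A.rank = r + 1 := by
    show Module.finrank ℝ (LinearMap.range A.mulVecLin) = r + 1
    rw [hranktop, finrank_top, Module.finrank_pi, Fintype.card_fin]
  have hrd : Module.finrank ℝ (LinearMap.range ((Aᵀ).mulVecLin)) = r + 1 := by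
    have h := Matrix.rank_transpose A
    rw [hrankA] at h
    exact h
  have hkd : Module.finrank ℝ (LinearMap.ker (S.mulVecLin)) = r + 1 := by
    have h1 := LinearMap.finrank_range_add_finrank_ker (S.mulVecLin)
    rw [Module.finrank_pi, Fintype.card_fin] at h1
    have h2 : Module.finrank ℝ (LinearMap.range S.mulVecLin) = n - r - 1 := hrank
    omega
  have heq := Submodule.eq_of_le_of_finrank_le hle (by rw [hkd, hrd])
  have hvmem : v ∈ LinearMap.range ((Aᵀ).mulVecLin) := by
    rw [heq]
    simpa [LinearMap.mem_ker, mulVecLin_apply] using hv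
  obtain ⟨w, hw⟩ := hvmem
  exact ⟨w, hw⟩

lemma support_zero {n r : ℕ} (hn : r + 2 ≤ n) (p : Fin n → Fin r → ℝ)
    (hgen : InGeneralPosition p) (S : Matrix (Fin n) (Fin n) ℝ)
    (hSsym : S.IsSymm) (hAS : calA p * S = 0) (hrank : S.rank = n - r - 1)
    (v : Fin n → ℝ) (hv : S.mulVec v = 0) (t : Finset (Fin n))
    (hsupp : ∀ j ∉ t, v j = 0) (hcard : t.card + (r + 1) ≤ n) : v = 0 := by
  obtain ⟨w, rfl⟩ := null_space_rep hn p hgen S hSsym hAS hrank v hv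
  obtain ⟨s, hssub, hs⟩ := Finset.exists_subset_card_eq
    (show r + 1 ≤ tᶜ.card by
      rw [Finset.card_compl, Fintype.card_fin]; omega)
  have hw : w = 0 := by
    apply ortho_zero p hgen s hs
    intro i his
    have hnt : i ∉ t := by
      have := hssub his
      simpa [Finset.mem_compl] using this
    have h0 := hsupp i hnt
    rw [← h0]
    simp [mulVec, dotProduct, transpose_apply, mul_comm]
  rw [hw, mulVec_zero]

open scoped MatrixOrder in
lemma degree_bound {n r : ℕ} (hn : r + 2 ≤ n) (G : SimpleGraph (Fin n))
    (p : Fin n → Fin r → ℝ) (hgen : InGeneralPosition p)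
    (S : Matrix (Fin n) (Fin n) ℝ) (hSsym : S.IsSymm)
    (hS0 : ∀ i j, i ≠ j → ¬ G.Adj i j → S i j = 0)
    (hAS : calA p * S = 0) (hpsd : S.PosSemidef) (hrank : S.rank = n - r - 1)
    (i : Fin n) (M : Finset (Fin n)) (hMprop : ∀ j ∈ M, ¬ G.Adj i j ∧ j ≠ i) :
    M.card + (r + 1) ≤ n := by
  by_contra hcon
  have hMge : n - r - 1 ≤ M.card := by omega
  obtain ⟨M', hM'sub, hM'⟩ := Finset.exists_subset_card_eq hMge
  set U := CFC.sqrt S with hU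
  have hU2 : U * U = S := CFC.sqrt_mul_sqrt_self S hpsd.nonneg
  have hUt : Uᵀ = U := by
    have h : U.IsSymm := by simpa using (CFC.sqrt_nonneg S).posSemidef.1
    exact h.eq
  have hUe : ∀ a b, U a b = U b a := by
    intro a b
    simpa [Matrix.transpose_apply] using (congrFun (congrFun hUt a) b).symm
  have huu : ∀ a b, (U a) ⬝ᵥ (U b) = S a b := by
    intro a b
    rw [← hU2]
    simp only [mul_apply, dotProduct]
    exact Finset.sum_congr rfl fun k _ => by rw [hUe b k]
  have hUS : ∀ x, U.mulVec x = 0 → S.mulVec x = 0 := by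
    intro x hx
    rw [← hU2, ← mulVec_mulVec, hx, mulVec_zero]
  have hSU : ∀ x, S.mulVec x = 0 → U.mulVec x = 0 := by
    intro x hx
    have h0 : (U.mulVec x) ⬝ᵥ (U.mulVec x) = 0 := by
      have h1 : x ⬝ᵥ S.mulVec x = 0 := by rw [hx, dotProduct_zero]
      rw [← hU2, ← mulVec_mulVec, dotProduct_mulVec, ← hUt, vecMul_transpose, hUt] at h1
      exact h1
    exact dotProduct_self_eq_zero.mp h0
  have hker : LinearMap.ker (U.mulVecLin) = LinearMap.ker (S.mulVecLin) := by
    ext x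
    simp only [LinearMap.mem_ker, mulVecLin_apply]
    exact ⟨hUS x, hSU x⟩
  have hrangeU : Module.finrank ℝ (LinearMap.range U.mulVecLin) = n - r - 1 := by
    have h1 := LinearMap.finrank_range_add_finrank_ker (U.mulVecLin)
    have h2 := LinearMap.finrank_range_add_finrank_ker (S.mulVecLin)
    rw [hker] at h1
    have h3 : Module.finrank ℝ (LinearMap.range S.mulVecLin) = n - r - 1 := hrank
    omega
  have hli : LinearIndependent ℝ (fun j : {x // x ∈ M'} => U j.1) := by
    rw [Fintype.linearIndependent_iff]
    intro g hg
    classical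
    set lam : Fin n → ℝ := fun j => if h : j ∈ M' then g ⟨j, h⟩ else 0 with hlam
    have hUlam : U.mulVec lam = 0 := by
      funext k
      have hgk := congrFun hg k
      simp only [Finset.sum_apply, Pi.smul_apply, smul_eq_mul, Pi.zero_apply] at hgk
      show (U.mulVec lam) k = 0
      rw [mulVec, dotProduct]
      rw [← Finset.sum_subset (Finset.subset_univ M')
        (by intro j _ hj; simp [hlam, dif_neg hj])]
      rw [← Finset.sum_attach M' (fun j => U k j * lam j)]
      rw [← hgk]
      apply Finset.sum_congr rfl
      intro j _
      simp [hlam, dif_pos j.2, hUe k j.1, mul_comm]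
    have hlam0 : lam = 0 := by
      apply support_zero hn p hgen S hSsym hAS hrank lam (hUS lam hUlam) M'
      · intro j hj; simp [hlam, dif_neg hj]
      · omega
    intro j
    have := congrFun hlam0 j.1
    simpa [hlam, dif_pos j.2] using this
  have hmemrange : ∀ j : Fin n, U j ∈ LinearMap.range U.mulVecLin := by
    intro j
    refine ⟨Pi.single j 1, ?_⟩
    funext k
    simp [mulVecLin_apply, mulVec_single, hUe k j]
  have hspanV : Submodule.span ℝ (Set.range (fun j : {x // x ∈ M'} => U j.1))
      = LinearMap.range U.mulVecLin := by
    apply Submodule.eq_of_le_of_finrank_le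
    · apply Submodule.span_le.mpr
      rintro _ ⟨j, rfl⟩
      exact hmemrange j.1
    · rw [hrangeU, finrank_span_eq_card hli, Fintype.card_coe, hM']
  have hui : U i ∈ Submodule.span ℝ (Set.range (fun j : {x // x ∈ M'} => U j.1)) := by
    rw [hspanV]; exact hmemrange i
  have huiz : U i ⬝ᵥ U i = 0 := by
    have key : ∀ x ∈ Submodule.span ℝ (Set.range (fun j : {x // x ∈ M'} => U j.1)),
        U i ⬝ᵥ x = 0 := by
      intro x hx
      induction hx using Submodule.span_induction with
      | mem z hz =>
        obtain ⟨j, rfl⟩ := hz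
        rw [huu]
        obtain ⟨hadj, hne⟩ := hMprop j.1 (hM'sub j.2)
        exact hS0 i j.1 (Ne.symm hne) hadj
      | zero => simp
      | add x y _ _ hx hy => simp [dotProduct_add, hx, hy]
      | smul c x _ hx => simp [dotProduct_smul, hx]
    exact key (U i) hui
  have hui0 : U i = 0 := dotProduct_self_eq_zero.mp huiz
  have hrow : ∀ k, S i k = 0 := by
    intro k; rw [← huu, hui0, zero_dotProduct]
  have hsingle : S.mulVec (Pi.single i 1) = 0 := by
    funext k
    have hki : S k i = 0 := by
      have h : S k i = S i k := by
        simpa [Matrix.transpose_apply] using congrFun (congrFun hSsym i) k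
      rw [h]; exact hrow k
    simp [mulVec_single, hki]
  have hz := support_zero hn p hgen S hSsym hAS hrank (Pi.single i 1) hsingle {i}
    (by intro j hj; simp only [Finset.mem_singleton] at hj; simp [Pi.single_apply, hj])
    (by rw [Finset.card_singleton]; omega)
  have := congrFun hz i
  simp at this

theorem no_quadric_at_infinity_of_general_position {n r : ℕ} (hn : r + 2 ≤ n)
    (G : SimpleGraph (Fin n)) (p : Fin n → Fin r → ℝ)
    (hgen : InGeneralPosition p)
    (hspan : affineSpan ℝ (Set.range p) = ⊤)
    (S : Matrix (Fin n) (Fin n) ℝ) (hS : IsStressMatrix G p S)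
    (hpsd : S.PosSemidef) (hrank : S.rank = n - r - 1) :
    ¬ ∃ Φ : Matrix (Fin r) (Fin r) ℝ, Φ ≠ 0 ∧ Φ.IsSymm ∧
      ∀ i j, G.Adj i j → (p i - p j) ⬝ᵥ Φ.mulVec (p i - p j) = 0 := by
  classical
  rintro ⟨Φ, hΦne, hΦsym, hΦE⟩
  obtain ⟨hSsym, hS0, hAS⟩ := hS
  have hSe : ∀ a b, S b a = S a b := by
    intro a b
    simpa [Matrix.transpose_apply] using congrFun (congrFun hSsym a) b
  have hrowsum : ∀ k, ∑ j, S k j = 0 := by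
    intro k
    have h := congrFun (congrFun hAS ⟨r, Nat.lt_succ_self r⟩) k
    simp only [Matrix.mul_apply, calA, Matrix.zero_apply, dif_neg (lt_irrefl r), one_mul] at h
    rw [← h]
    exact Finset.sum_congr rfl fun j _ => hSe j k
  have hP : ∀ (b : Fin r) (k : Fin n), ∑ j, S k j * p j b = 0 := by
    intro b k
    have h := congrFun (congrFun hAS ⟨b.1, Nat.lt_succ_of_lt b.2⟩) k
    simp only [Matrix.mul_apply, calA, Matrix.zero_apply, dif_pos b.2, Fin.eta] at h
    rw [← h]
    exact Finset.sum_congr rfl fun j _ => by rw [mul_comm, hSe j k]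
  have hsum_dot : ∀ (k : Fin n) (v : Fin r → ℝ), ∑ j, S k j * (v ⬝ᵥ p j) = 0 := by
    intro k v
    have h1 : ∀ j ∈ Finset.univ, S k j * (v ⬝ᵥ p j) = ∑ b, v b * (S k j * p j b) := by
      intro j _
      rw [dotProduct, Finset.mul_sum]
      exact Finset.sum_congr rfl fun b _ => by ring
    rw [Finset.sum_congr rfl h1, Finset.sum_comm]
    have h2 : ∀ b ∈ Finset.univ, ∑ j, v b * (S k j * p j b) = 0 := by
      intro b _
      rw [← Finset.mul_sum, hP b k, mul_zero]
    rw [Finset.sum_congr rfl h2, Finset.sum_const_zero]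
  have hsymdot : ∀ u w : Fin r → ℝ, u ⬝ᵥ Φ.mulVec w = w ⬝ᵥ Φ.mulVec u := by
    intro u w
    rw [dotProduct_mulVec, ← hΦsym.eq, vecMul_transpose, hΦsym.eq, dotProduct_comm]
  have hEexp : ∀ i j : Fin n, (p i - p j) ⬝ᵥ Φ.mulVec (p i - p j)
      = p i ⬝ᵥ Φ.mulVec (p i) + p j ⬝ᵥ Φ.mulVec (p j) - 2 * (p i ⬝ᵥ Φ.mulVec (p j)) := by
    intro i j
    rw [mulVec_sub, dotProduct_sub, sub_dotProduct, sub_dotProduct]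
    have h := hsymdot (p j) (p i)
    linarith
  have hSy : ∀ k, ∑ j, S k j * (p j ⬝ᵥ Φ.mulVec (p j)) = 0 := by
    intro k
    have hterm : ∀ j ∈ Finset.univ, S k j * (p j ⬝ᵥ Φ.mulVec (p j)) =
        S k j * ((p k - p j) ⬝ᵥ Φ.mulVec (p k - p j)) - S k j * (p k ⬝ᵥ Φ.mulVec (p k))
        + 2 * (S k j * (p k ⬝ᵥ Φ.mulVec (p j))) := by
      intro j _
      rw [hEexp k j]; ring
    rw [Finset.sum_congr rfl hterm, Finset.sum_add_distrib, Finset.sum_sub_distrib,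
      ← Finset.sum_mul, ← Finset.mul_sum, hrowsum k]
    have h1 : ∑ j, S k j * ((p k - p j) ⬝ᵥ Φ.mulVec (p k - p j)) = 0 := by
      apply Finset.sum_eq_zero
      intro j _
      rcases eq_or_ne j k with rfl | hne
      · simp
      · by_cases hadj : G.Adj k j
        · rw [hΦE k j hadj, mul_zero]
        · rw [hS0 k j (Ne.symm hne) hadj, zero_mul]
    have h2 : ∑ j, S k j * (p k ⬝ᵥ Φ.mulVec (p j)) = 0 := by
      have hc : ∀ j ∈ Finset.univ, S k j * (p k ⬝ᵥ Φ.mulVec (p j))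
          = S k j * ((p k ᵥ* Φ) ⬝ᵥ p j) := by
        intro j _; rw [dotProduct_mulVec]
      rw [Finset.sum_congr rfl hc]
      exact hsum_dot k (p k ᵥ* Φ)
    rw [h1, h2]; ring
  have hSE : ∀ i k, ∑ j, S k j * ((p i - p j) ⬝ᵥ Φ.mulVec (p i - p j)) = 0 := by
    intro i k
    have hterm : ∀ j ∈ Finset.univ, S k j * ((p i - p j) ⬝ᵥ Φ.mulVec (p i - p j)) =
        S k j * (p i ⬝ᵥ Φ.mulVec (p i)) + S k j * (p j ⬝ᵥ Φ.mulVec (p j))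
        - 2 * (S k j * ((p i ᵥ* Φ) ⬝ᵥ p j)) := by
      intro j _
      rw [hEexp i j, dotProduct_mulVec (p i) Φ (p j)]; ring
    rw [Finset.sum_congr rfl hterm, Finset.sum_sub_distrib, Finset.sum_add_distrib,
      ← Finset.sum_mul, ← Finset.mul_sum, hrowsum k, hSy k, hsum_dot k (p i ᵥ* Φ)]
    ring
  have hE0 : ∀ i j : Fin n, (p i - p j) ⬝ᵥ Φ.mulVec (p i - p j) = 0 := by
    intro i j0
    set t := Finset.univ.filter (fun j => ¬ G.Adj i j ∧ j ≠ i) with ht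
    have hdeg := degree_bound hn G p hgen S hSsym hS0 hAS hpsd hrank i t
      (by intro j hj; rw [ht, Finset.mem_filter] at hj; exact hj.2)
    have hmv : S.mulVec (fun j => (p i - p j) ⬝ᵥ Φ.mulVec (p i - p j)) = 0 := by
      funext k
      rw [mulVec, dotProduct]
      exact hSE i k
    have hsupp : ∀ j ∉ t, (p i - p j) ⬝ᵥ Φ.mulVec (p i - p j) = 0 := by
      intro j hj
      rw [ht, Finset.mem_filter] at hj
      simp only [Finset.mem_univ, true_and] at hj
      by_cases hadj : G.Adj i j
      · exact hΦE i j hadj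
      · have hji : j = i := by
          by_contra hne
          exact hj ⟨hadj, hne⟩
        rw [hji]; simp
    have hv := support_zero hn p hgen S hSsym hAS hrank _ hmv t hsupp hdeg
    exact congrFun hv j0
  -- now conclude Φ = 0
  rcases Nat.eq_zero_or_pos r with hr0 | hrpos
  · apply hΦne
    subst hr0
    ext a b
    exact a.elim0
  · obtain ⟨s, -, hs⟩ := Finset.exists_subset_card_eq
      (show r + 1 ≤ (Finset.univ : Finset (Fin n)).card by
        rw [Finset.card_univ, Fintype.card_fin]; omega)
    have haff := hgen s hs
    have hne : Nonempty {x // x ∈ s} := (Finset.card_pos.mp (by omega)).to_subtype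
    obtain ⟨i0⟩ := hne
    have hli := (affineIndependent_iff_linearIndependent_vsub ℝ
      (fun i : {x // x ∈ s} => p i.1) i0).mp haff
    have hcard : Fintype.card {x : {x // x ∈ s} // x ≠ i0} = r := by
      have h1 := Fintype.card_subtype_compl (fun x : {x // x ∈ s} => x = i0)
      rw [Fintype.card_subtype_eq, Fintype.card_coe, hs] at h1
      simpa using h1
    have hnonempty : Nonempty {x : {x // x ∈ s} // x ≠ i0} := by
      rw [← Fintype.card_pos_iff, hcard]; omega
    have hspan2 := hli.span_eq_top_of_card_eq_finrank
      (by rw [hcard, Module.finrank_pi, Fintype.card_fin])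
    have hgen2 : ∀ (a b : {x : {x // x ∈ s} // x ≠ i0}),
        (p a.1.1 - p i0.1) ⬝ᵥ Φ.mulVec (p b.1.1 - p i0.1) = 0 := by
      intro a b
      have h1 := hE0 a.1.1 i0.1
      have h2 := hE0 b.1.1 i0.1
      have h3 := hE0 a.1.1 b.1.1
      have hsab := hsymdot (p b.1.1) (p a.1.1)
      have hsa0 := hsymdot (p i0.1) (p a.1.1)
      have hsb0 := hsymdot (p i0.1) (p b.1.1)
      simp only [mulVec_sub, dotProduct_sub, sub_dotProduct] at h1 h2 h3 ⊢
      linarith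
    have hpolall : ∀ x y : Fin r → ℝ, x ⬝ᵥ Φ.mulVec y = 0 := by
      have step1 : ∀ (b : {x : {x // x ∈ s} // x ≠ i0}) (x' : Fin r → ℝ),
          x' ⬝ᵥ Φ.mulVec (p b.1.1 - p i0.1) = 0 := by
        intro b x'
        have hx : x' ∈ Submodule.span ℝ (Set.range
            (fun i : {x : {x // x ∈ s} // x ≠ i0} =>
              (fun i : {x // x ∈ s} => p i.1) i.1 -ᵥ (fun i : {x // x ∈ s} => p i.1) i0)) := by
          rw [hspan2]; trivial
        induction hx using Submodule.span_induction with
        | mem z hz =>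
          obtain ⟨a, rfl⟩ := hz
          simpa [vsub_eq_sub] using hgen2 a b
        | zero => simp
        | add u v _ _ hu hv => simp [add_dotProduct, hu, hv]
        | smul c u _ hu => simp [smul_dotProduct, hu]
      intro x y
      have hy : y ∈ Submodule.span ℝ (Set.range
          (fun i : {x : {x // x ∈ s} // x ≠ i0} =>
            (fun i : {x // x ∈ s} => p i.1) i.1 -ᵥ (fun i : {x // x ∈ s} => p i.1) i0)) := by
        rw [hspan2]; trivial
      induction hy using Submodule.span_induction with
      | mem z hz =>
        obtain ⟨b, rfl⟩ := hz
        simpa [vsub_eq_sub] using step1 b x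
      | zero => simp
      | add u v _ _ hu hv => simp [mulVec_add, dotProduct_add, hu, hv]
      | smul c u _ hu => simp [mulVec_smul, dotProduct_smul, hu]
    apply hΦne
    ext a b
    have h := hpolall (Pi.single a 1) (Pi.single b 1)
    simpa [single_dotProduct, mulVec_single] using h
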